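/- Fix integers 1 < k ≤ n ≤ m. There exist a constant C > 0 and a positive integer d₀, depending only on m, n and k, such that for every integer d ≥ d₀ and every point (b₁,…,b_k,a₁,…,a_k) ∈ S̃(d), the weight μ = ζ(b₁,…,b_k) satisfies W(μ) ≥ C·d^{(m+n−k−1)k}. -/

import Mathlib

/-- The Weyl dimension product
`W(μ) = ∏_{1≤i<j≤m} (μ_i − μ_j + j − i)/(j − i) · ∏_{m+1≤i<j≤m+n} (μ_i − μ_j + j − i)/(j − i)`
(0-indexed) as a rational number. -/
def weylW (m n : ℕ) (mu : Fin (m + n) → ℤ) : ℚ :=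
  (∏ p ∈ Finset.univ.filter
      (fun p : Fin (m + n) × Fin (m + n) => (p.1 : ℕ) < (p.2 : ℕ) ∧ (p.2 : ℕ) < m),
    (((mu p.1 - mu p.2 : ℤ) : ℚ) + ((p.2 : ℕ) : ℚ) - ((p.1 : ℕ) : ℚ)) /
      (((p.2 : ℕ) : ℚ) - ((p.1 : ℕ) : ℚ))) *
  (∏ p ∈ Finset.univ.filter
      (fun p : Fin (m + n) × Fin (m + n) => m ≤ (p.1 : ℕ) ∧ (p.1 : ℕ) < (p.2 : ℕ)),
    (((mu p.1 - mu p.2 : ℤ) : ℚ) + ((p.2 : ℕ) : ℚ) - ((p.1 : ℕ) : ℚ)) /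
      (((p.2 : ℕ) : ℚ) - ((p.1 : ℕ) : ℚ)))

/-- The set `S̃(d)`. -/
def tildeS (k d : ℕ) : Set ((Fin k → ℤ) × (Fin k → ℤ)) :=
  {ba | (∑ i, ba.1 i) - 2 * (∑ i, ba.2 i) = (d : ℤ)
    ∧ (∀ i j : Fin k, (j : ℕ) = (i : ℕ) + 1 →
        ((ba.1 i - ba.1 j : ℤ) : ℝ) ≥ (d : ℝ) / (2 * (k : ℝ) ^ 2))
    ∧ (∀ i : Fin k, (i : ℕ) = 0 → ((ba.1 i : ℤ) : ℝ) ≤ -((d : ℝ) / (2 * (k : ℝ) ^ 2)))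
    ∧ (∀ i j : Fin k, (j : ℕ) = (i : ℕ) + 1 → 0 ≤ ba.2 i - ba.2 j)
    ∧ (∀ i : Fin k, (i : ℕ) = 0 → ba.2 i ≤ 0)
    ∧ 0 ≤ (∑ i, ba.1 i) - (∑ i, ba.2 i)
    ∧ (∑ i, ba.1 i) - (∑ i, ba.2 i) ≤ (d : ℤ)
    ∧ (∀ v : Fin k, ba.2 v ≤ ba.1 v)}

/-- The weight `ζ(x₁,…,x_k) = (p, p−1, …, 1, x₁, …, x_k, −x_k, …, −x₁,
−(q+1), …, −(q+n−k))` with `p = m−k`, `q = 2m−2k` (0-indexed). -/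
def zeta (m n k : ℕ) (x : Fin k → ℤ) : Fin (m + n) → ℤ := fun i =>
  if h1 : (i : ℕ) < m - k then ((m - k - (i : ℕ) : ℕ) : ℤ)
  else if h2 : (i : ℕ) < m then x ⟨(i : ℕ) - (m - k), by omega⟩
  else if h3 : (i : ℕ) < m + k then -(x ⟨k - 1 - ((i : ℕ) - m), by omega⟩)
  else -(2 * (m : ℤ) - 2 * (k : ℤ) + (((i : ℕ) - (m + k) : ℕ) : ℤ) + 1)

theorem aux_card1 (N t₁ t₂ : ℕ) (h : t₂ ≤ N) :
    ((Finset.univ : Finset (Fin N × Fin N)).filter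
      (fun p => ((p.1 : ℕ) < (p.2 : ℕ) ∧ (p.2 : ℕ) < t₂) ∧ t₁ ≤ (p.2 : ℕ))).card
      = ∑ j ∈ Finset.Ico t₁ t₂, j := by
  rw [Finset.card_filter, Fintype.sum_prod_type, Finset.sum_comm]
  have step : ∀ j : Fin N,
      (∑ i : Fin N, if ((i : ℕ) < (j : ℕ) ∧ (j : ℕ) < t₂) ∧ t₁ ≤ (j : ℕ) then 1 else 0)
      = (fun jv : ℕ => if t₁ ≤ jv ∧ jv < t₂ then jv else 0) (j : ℕ) := by
    intro j
    show _ = if t₁ ≤ (j : ℕ) ∧ (j : ℕ) < t₂ then (j : ℕ) else 0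
    by_cases hq : t₁ ≤ (j : ℕ) ∧ (j : ℕ) < t₂
    · rw [if_pos hq]
      have e1 : (∑ i : Fin N, if ((i : ℕ) < (j : ℕ) ∧ (j : ℕ) < t₂) ∧ t₁ ≤ (j : ℕ) then 1 else 0)
          = ∑ i : Fin N, if i < j then 1 else 0 := by
        refine Finset.sum_congr rfl fun i _ => ?_
        by_cases hij : i < j
        · rw [if_pos hij, if_pos ⟨⟨hij, hq.2⟩, hq.1⟩]
        · rw [if_neg hij, if_neg (fun hcon => hij (Fin.lt_def.mpr hcon.1.1))]
      rw [e1, ← Finset.card_filter]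
      have : Finset.univ.filter (fun i : Fin N => i < j) = Finset.Iio j := by
        ext i; simp
      rw [this, Fin.card_Iio]
    · rw [if_neg hq]
      refine Finset.sum_eq_zero fun i _ => ?_
      rw [if_neg (by tauto)]
  rw [Finset.sum_congr rfl fun j _ => step j,
    Fin.sum_univ_eq_sum_range (fun jv : ℕ => if t₁ ≤ jv ∧ jv < t₂ then jv else 0) N]
  rw [← Finset.sum_filter]
  congr 1
  ext j; simp; omega

theorem aux_card2 (N t₁ t₂ : ℕ) (h : t₂ ≤ N) :
    ((Finset.univ : Finset (Fin N × Fin N)).filter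
      (fun p => (t₁ ≤ (p.1 : ℕ) ∧ (p.1 : ℕ) < (p.2 : ℕ)) ∧ (p.1 : ℕ) < t₂)).card
      = ∑ i ∈ Finset.Ico t₁ t₂, (N - 1 - i) := by
  rw [Finset.card_filter, Fintype.sum_prod_type]
  have step : ∀ i : Fin N,
      (∑ j : Fin N, if (t₁ ≤ (i : ℕ) ∧ (i : ℕ) < (j : ℕ)) ∧ (i : ℕ) < t₂ then 1 else 0)
      = (fun iv : ℕ => if t₁ ≤ iv ∧ iv < t₂ then N - 1 - iv else 0) (i : ℕ) := by
    intro i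
    show _ = if t₁ ≤ (i : ℕ) ∧ (i : ℕ) < t₂ then N - 1 - (i : ℕ) else 0
    by_cases hq : t₁ ≤ (i : ℕ) ∧ (i : ℕ) < t₂
    · rw [if_pos hq]
      have e1 : (∑ j : Fin N, if (t₁ ≤ (i : ℕ) ∧ (i : ℕ) < (j : ℕ)) ∧ (i : ℕ) < t₂ then 1 else 0)
          = ∑ j : Fin N, if i < j then 1 else 0 := by
        refine Finset.sum_congr rfl fun j _ => ?_
        by_cases hij : i < j
        · rw [if_pos hij, if_pos ⟨⟨hq.1, hij⟩, hq.2⟩]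
        · rw [if_neg hij, if_neg (fun hcon => hij (Fin.lt_def.mpr hcon.1.2))]
      rw [e1, ← Finset.card_filter]
      have : Finset.univ.filter (fun j : Fin N => i < j) = Finset.Ioi i := by
        ext j; simp
      rw [this, Fin.card_Ioi]
    · rw [if_neg hq]
      refine Finset.sum_eq_zero fun j _ => ?_
      rw [if_neg (by tauto)]
  rw [Finset.sum_congr rfl fun i _ => step i,
    Fin.sum_univ_eq_sum_range (fun iv : ℕ => if t₁ ≤ iv ∧ iv < t₂ then N - 1 - iv else 0) N]
  rw [← Finset.sum_filter]
  congr 1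
  ext i; simp; omega

theorem aux_sum (m n k : ℕ) (hk : 1 ≤ k) (hkn : k ≤ n) (hnm : n ≤ m) :
    (∑ j ∈ Finset.Ico (m - k) m, j) + (∑ i ∈ Finset.Ico m (m + k), (m + n - 1 - i))
      = (m + n - k - 1) * k := by
  rw [Finset.sum_Ico_eq_sum_range, Finset.sum_Ico_eq_sum_range]
  have h1 : m - (m - k) = k := by omega
  have h2 : m + k - m = k := by omega
  rw [h1, h2, ← Finset.sum_add_distrib]
  have h3 : ∀ i ∈ Finset.range k, (m - k + i) + (m + n - 1 - (m + i)) = m + n - k - 1 := by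
    intro i hi; simp only [Finset.mem_range] at hi; omega
  rw [Finset.sum_congr rfl h3, Finset.sum_const, smul_eq_mul, Finset.card_range]
  exact Nat.mul_comm _ _

theorem zeta_eval1 (m n k : ℕ) (x : Fin k → ℤ) (i : Fin (m + n)) (h : (i : ℕ) < m - k) :
    zeta m n k x i = ((m - k - (i : ℕ) : ℕ) : ℤ) := by
  rw [zeta, dif_pos h]

theorem zeta_eval2 (m n k : ℕ) (x : Fin k → ℤ) (i : Fin (m + n))
    (h1 : ¬ (i : ℕ) < m - k) (h2 : (i : ℕ) < m) :
    zeta m n k x i = x ⟨(i : ℕ) - (m - k), by omega⟩ := by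
  rw [zeta, dif_neg h1, dif_pos h2]

theorem zeta_eval3 (m n k : ℕ) (x : Fin k → ℤ) (i : Fin (m + n))
    (h2 : ¬ (i : ℕ) < m) (h3 : (i : ℕ) < m + k) :
    zeta m n k x i = -(x ⟨k - 1 - ((i : ℕ) - m), by omega⟩) := by
  rw [zeta, dif_neg (by omega), dif_neg h2, dif_pos h3]

theorem zeta_eval4 (m n k : ℕ) (x : Fin k → ℤ) (i : Fin (m + n))
    (h3 : ¬ (i : ℕ) < m + k) :
    zeta m n k x i = -(2 * (m : ℤ) - 2 * (k : ℤ) + (((i : ℕ) - (m + k) : ℕ) : ℤ) + 1) := by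
  rw [zeta, dif_neg (by omega), dif_neg (by omega), dif_neg h3]


/-- For `1 < k ≤ n ≤ m` there are `C > 0` and `d₀` (depending only on `m`, `n`, `k`) such
that for all `d ≥ d₀` and all `(b,a) ∈ S̃(d)`, the weight `μ = ζ(b)` satisfies
`W(μ) ≥ C·d^{(m+n−k−1)k}`. -/
theorem zeta_weylW_lower_bound (m n k : ℕ) (hk : 1 < k) (hkn : k ≤ n) (hnm : n ≤ m) :
    ∃ C : ℝ, 0 < C ∧ ∃ d₀ : ℕ, 0 < d₀ ∧ ∀ d : ℕ, d₀ ≤ d →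
      ∀ ba ∈ tildeS k d,
        C * (d : ℝ) ^ ((m + n - k - 1) * k) ≤ ((weylW m n (zeta m n k ba.1) : ℚ) : ℝ) := by
  have hkm : k ≤ m := hkn.trans hnm
  have hk0 : (0:ℝ) < (k:ℝ) := by exact_mod_cast (by omega : 0 < k)
  have hmn0 : (0:ℝ) < (m:ℝ) + (n:ℝ) := by
    have : (0:ℝ) < (n:ℝ) := by exact_mod_cast (by omega : 0 < n)
    have : (0:ℝ) ≤ (m:ℝ) := Nat.cast_nonneg m
    linarith
  set c : ℝ := 1 / (2 * (k:ℝ)^2 * ((m:ℝ) + (n:ℝ))) with hc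
  have hc0 : 0 < c := by rw [hc]; positivity
  refine ⟨c ^ ((m + n - k - 1) * k), pow_pos hc0 _, 1, one_pos, ?_⟩
  intro d hd ba hba
  simp only [tildeS, Set.mem_setOf_eq] at hba
  obtain ⟨-, h2, h3, -, -, -, -, -⟩ := hba
  set δ : ℝ := (d:ℝ) / (2 * (k:ℝ)^2) with hδ
  have hδ0 : 0 ≤ δ := by rw [hδ]; positivity
  have hcd0 : 0 ≤ c * (d:ℝ) := mul_nonneg hc0.le (Nat.cast_nonneg d)
  -- monotonicity of b
  have mono : ∀ t : ℕ, ∀ u v : Fin k, (v : ℕ) = (u : ℕ) + t →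
      ((ba.1 v : ℤ) : ℝ) ≤ ((ba.1 u : ℤ) : ℝ) := by
    intro t
    induction t with
    | zero =>
      intro u v huv
      have h : v = u := Fin.ext (by omega)
      rw [h]
    | succ t ih =>
      intro u v huv
      have hw : (u : ℕ) + t < k := by omega
      have hstep := h2 ⟨(u : ℕ) + t, hw⟩ v (by simp only [Fin.val_mk]; omega)
      have hih := ih u ⟨(u : ℕ) + t, hw⟩ rfl
      push_cast at hstep
      linarith
  have gap : ∀ u v : Fin k, (u : ℕ) < (v : ℕ) →
      ((ba.1 v : ℤ) : ℝ) ≤ ((ba.1 u : ℤ) : ℝ) - δ := by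
    intro u v huv
    have hw : (u : ℕ) + 1 < k := by omega
    have hstep := h2 u ⟨(u : ℕ) + 1, hw⟩ rfl
    have hmono := mono ((v : ℕ) - ((u : ℕ) + 1)) ⟨(u : ℕ) + 1, hw⟩ v (by simp only [Fin.val_mk]; omega)
    push_cast at hstep
    linarith
  have hneg : ∀ u : Fin k, ((ba.1 u : ℤ) : ℝ) ≤ -δ := by
    intro u
    have h0k : 0 < k := by omega
    have h30 := h3 ⟨0, h0k⟩ rfl
    have hmono := mono (u : ℕ) ⟨0, h0k⟩ u (by simp only [Fin.val_mk]; omega)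
    linarith
  -- generic factor bounds
  have hdiv : ∀ i j : Fin (m + n), (i : ℕ) < (j : ℕ) → ∀ A : ℝ, δ ≤ A →
      c * (d:ℝ) ≤ (A + ((j : ℕ) : ℝ) - ((i : ℕ) : ℝ)) / (((j : ℕ) : ℝ) - ((i : ℕ) : ℝ)) := by
    intro i j hij A hA
    have hJ : (0:ℝ) < ((j : ℕ) : ℝ) - ((i : ℕ) : ℝ) := by
      have : ((i : ℕ) : ℝ) < ((j : ℕ) : ℝ) := by exact_mod_cast hij
      linarith
    rw [le_div_iff₀ hJ]
    have hjN : ((j : ℕ) : ℝ) ≤ (m:ℝ) + (n:ℝ) := by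
      have := j.isLt
      push_cast
      exact_mod_cast Nat.cast_le.mpr (le_of_lt this)
    have hi0 : (0:ℝ) ≤ ((i : ℕ) : ℝ) := Nat.cast_nonneg _
    have hJN : ((j : ℕ) : ℝ) - ((i : ℕ) : ℝ) ≤ (m:ℝ) + (n:ℝ) := by linarith
    have hcd : c * (d:ℝ) * (((j : ℕ) : ℝ) - ((i : ℕ) : ℝ)) ≤ c * (d:ℝ) * ((m:ℝ) + (n:ℝ)) :=
      mul_le_mul_of_nonneg_left hJN hcd0
    have hce : c * (d:ℝ) * ((m:ℝ) + (n:ℝ)) = δ := by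
      rw [hc, hδ]; field_simp
    linarith
  have hdiv1 : ∀ i j : Fin (m + n), (i : ℕ) < (j : ℕ) → ∀ A : ℝ, 0 ≤ A →
      (1:ℝ) ≤ (A + ((j : ℕ) : ℝ) - ((i : ℕ) : ℝ)) / (((j : ℕ) : ℝ) - ((i : ℕ) : ℝ)) := by
    intro i j hij A hA
    have hJ : (0:ℝ) < ((j : ℕ) : ℝ) - ((i : ℕ) : ℝ) := by
      have : ((i : ℕ) : ℝ) < ((j : ℕ) : ℝ) := by exact_mod_cast hij
      linarith
    rw [le_div_iff₀ hJ]
    linarith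
  -- the two blocks
  have key1 : ∀ p ∈ Finset.univ.filter
      (fun p : Fin (m + n) × Fin (m + n) => (p.1 : ℕ) < (p.2 : ℕ) ∧ (p.2 : ℕ) < m),
      (if m - k ≤ (p.2 : ℕ) then c * (d:ℝ) else 1) ≤
        (((zeta m n k ba.1 p.1 : ℤ) : ℝ) - ((zeta m n k ba.1 p.2 : ℤ) : ℝ)
          + ((p.2 : ℕ) : ℝ) - ((p.1 : ℕ) : ℝ)) / (((p.2 : ℕ) : ℝ) - ((p.1 : ℕ) : ℝ)) := by
    intro p hp
    rw [Finset.mem_filter] at hp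
    obtain ⟨-, hij, hjm⟩ := hp
    by_cases hL : m - k ≤ (p.2 : ℕ)
    · rw [if_pos hL]
      have hAδ : δ ≤ ((zeta m n k ba.1 p.1 : ℤ) : ℝ) - ((zeta m n k ba.1 p.2 : ℤ) : ℝ) := by
        rw [zeta_eval2 m n k ba.1 p.2 (by omega) hjm]
        by_cases hi : (p.1 : ℕ) < m - k
        · rw [zeta_eval1 m n k ba.1 p.1 hi]
          have hn2 := hneg ⟨(p.2 : ℕ) - (m - k), by omega⟩
          have hge : (0:ℝ) ≤ (((m - k - (p.1 : ℕ) : ℕ) : ℤ) : ℝ) := by positivity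
          linarith
        · rw [zeta_eval2 m n k ba.1 p.1 hi (by omega)]
          have hg := gap ⟨(p.1 : ℕ) - (m - k), by omega⟩ ⟨(p.2 : ℕ) - (m - k), by omega⟩
            (by simp only [Fin.val_mk]; omega)
          linarith
      exact hdiv p.1 p.2 hij _ hAδ
    · rw [if_neg hL]
      rw [zeta_eval1 m n k ba.1 p.1 (by omega), zeta_eval1 m n k ba.1 p.2 (by omega)]
      apply hdiv1 p.1 p.2 hij
      rw [sub_nonneg]
      have h' : (m - k - (p.2 : ℕ)) ≤ (m - k - (p.1 : ℕ)) := by omega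
      exact_mod_cast h'
  have key2 : ∀ p ∈ Finset.univ.filter
      (fun p : Fin (m + n) × Fin (m + n) => m ≤ (p.1 : ℕ) ∧ (p.1 : ℕ) < (p.2 : ℕ)),
      (if (p.1 : ℕ) < m + k then c * (d:ℝ) else 1) ≤
        (((zeta m n k ba.1 p.1 : ℤ) : ℝ) - ((zeta m n k ba.1 p.2 : ℤ) : ℝ)
          + ((p.2 : ℕ) : ℝ) - ((p.1 : ℕ) : ℝ)) / (((p.2 : ℕ) : ℝ) - ((p.1 : ℕ) : ℝ)) := by
    intro p hp
    rw [Finset.mem_filter] at hp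
    obtain ⟨-, hmi, hij⟩ := hp
    by_cases hL : (p.1 : ℕ) < m + k
    · rw [if_pos hL]
      have hAδ : δ ≤ ((zeta m n k ba.1 p.1 : ℤ) : ℝ) - ((zeta m n k ba.1 p.2 : ℤ) : ℝ) := by
        rw [zeta_eval3 m n k ba.1 p.1 (by omega) hL]
        by_cases hj : (p.2 : ℕ) < m + k
        · rw [zeta_eval3 m n k ba.1 p.2 (by omega) hj]
          have hg := gap ⟨k - 1 - ((p.2 : ℕ) - m), by omega⟩ ⟨k - 1 - ((p.1 : ℕ) - m), by omega⟩
            (by simp only [Fin.val_mk]; omega)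
          push_cast
          linarith
        · rw [zeta_eval4 m n k ba.1 p.2 hj]
          have hn2 := hneg ⟨k - 1 - ((p.1 : ℕ) - m), by omega⟩
          have hkm' : (k:ℝ) ≤ (m:ℝ) := by exact_mod_cast hkm
          have h0 : (0:ℝ) ≤ (((p.2 : ℕ) - (m + k) : ℕ) : ℝ) := Nat.cast_nonneg _
          push_cast
          linarith
      exact hdiv p.1 p.2 hij _ hAδ
    · rw [if_neg hL]
      rw [zeta_eval4 m n k ba.1 p.1 hL, zeta_eval4 m n k ba.1 p.2 (by omega)]
      apply hdiv1 p.1 p.2 hij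
      have h' : ((p.1 : ℕ) - (m + k)) ≤ ((p.2 : ℕ) - (m + k)) := by omega
      have h'' : (((p.1 : ℕ) - (m + k) : ℕ) : ℝ) ≤ (((p.2 : ℕ) - (m + k) : ℕ) : ℝ) :=
        Nat.cast_le.mpr h'
      push_cast
      push_cast at h''
      linarith
  -- cast of weylW to ℝ
  have hcast : ((weylW m n (zeta m n k ba.1) : ℚ) : ℝ) =
      (∏ p ∈ Finset.univ.filter
          (fun p : Fin (m + n) × Fin (m + n) => (p.1 : ℕ) < (p.2 : ℕ) ∧ (p.2 : ℕ) < m),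
        (((zeta m n k ba.1 p.1 : ℤ) : ℝ) - ((zeta m n k ba.1 p.2 : ℤ) : ℝ)
          + ((p.2 : ℕ) : ℝ) - ((p.1 : ℕ) : ℝ)) / (((p.2 : ℕ) : ℝ) - ((p.1 : ℕ) : ℝ))) *
      (∏ p ∈ Finset.univ.filter
          (fun p : Fin (m + n) × Fin (m + n) => m ≤ (p.1 : ℕ) ∧ (p.1 : ℕ) < (p.2 : ℕ)),
        (((zeta m n k ba.1 p.1 : ℤ) : ℝ) - ((zeta m n k ba.1 p.2 : ℤ) : ℝ)
          + ((p.2 : ℕ) : ℝ) - ((p.1 : ℕ) : ℝ)) / (((p.2 : ℕ) : ℝ) - ((p.1 : ℕ) : ℝ))) := by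
    rw [weylW]
    push_cast
    rfl
  rw [hcast]
  set s1 := Finset.univ.filter
      (fun p : Fin (m + n) × Fin (m + n) => (p.1 : ℕ) < (p.2 : ℕ) ∧ (p.2 : ℕ) < m) with hs1
  set s2 := Finset.univ.filter
      (fun p : Fin (m + n) × Fin (m + n) => m ≤ (p.1 : ℕ) ∧ (p.1 : ℕ) < (p.2 : ℕ)) with hs2
  have hite1 : ∀ p : Fin (m + n) × Fin (m + n),
      0 ≤ (if m - k ≤ (p.2 : ℕ) then c * (d:ℝ) else 1) := by
    intro p; split
    · exact hcd0
    · exact zero_le_one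
  have hite2 : ∀ p : Fin (m + n) × Fin (m + n),
      0 ≤ (if (p.1 : ℕ) < m + k then c * (d:ℝ) else 1) := by
    intro p; split
    · exact hcd0
    · exact zero_le_one
  have hprodle1 := Finset.prod_le_prod (fun p _ => hite1 p) key1
  have hprodle2 := Finset.prod_le_prod (fun p _ => hite2 p) key2
  have heq1 : ∏ p ∈ s1, (if m - k ≤ (p.2 : ℕ) then c * (d:ℝ) else 1)
      = (c * (d:ℝ)) ^ (∑ j ∈ Finset.Ico (m - k) m, j) := by
    rw [← Finset.prod_filter_mul_prod_filter_not s1 (fun p => m - k ≤ (p.2 : ℕ))]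
    rw [Finset.prod_congr rfl (fun p hp => if_pos (Finset.mem_filter.mp hp).2),
        Finset.prod_const,
        Finset.prod_congr rfl (fun p hp => if_neg (Finset.mem_filter.mp hp).2),
        Finset.prod_const_one, mul_one]
    congr 1
    rw [hs1, Finset.filter_filter]
    exact aux_card1 (m + n) (m - k) m (by omega)
  have heq2 : ∏ p ∈ s2, (if (p.1 : ℕ) < m + k then c * (d:ℝ) else 1)
      = (c * (d:ℝ)) ^ (∑ i ∈ Finset.Ico m (m + k), (m + n - 1 - i)) := by
    rw [← Finset.prod_filter_mul_prod_filter_not s2 (fun p => (p.1 : ℕ) < m + k)]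
    rw [Finset.prod_congr rfl (fun p hp => if_pos (Finset.mem_filter.mp hp).2),
        Finset.prod_const,
        Finset.prod_congr rfl (fun p hp => if_neg (Finset.mem_filter.mp hp).2),
        Finset.prod_const_one, mul_one]
    congr 1
    rw [hs2, Finset.filter_filter]
    exact aux_card2 (m + n) m (m + k) (by omega)
  calc c ^ ((m + n - k - 1) * k) * (d:ℝ) ^ ((m + n - k - 1) * k)
      = (c * (d:ℝ)) ^ ((m + n - k - 1) * k) := (mul_pow _ _ _).symm
    _ = (c * (d:ℝ)) ^ ((∑ j ∈ Finset.Ico (m - k) m, j)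
          + (∑ i ∈ Finset.Ico m (m + k), (m + n - 1 - i))) := by
        rw [aux_sum m n k (by omega) hkn hnm]
    _ = (c * (d:ℝ)) ^ (∑ j ∈ Finset.Ico (m - k) m, j)
          * (c * (d:ℝ)) ^ (∑ i ∈ Finset.Ico m (m + k), (m + n - 1 - i)) := pow_add _ _ _
    _ ≤ _ := by
        rw [← heq1, ← heq2]
        exact mul_le_mul hprodle1 hprodle2
          (Finset.prod_nonneg (fun p _ => hite2 p))
          (le_trans (Finset.prod_nonneg fun p _ => hite1 p) hprodle1)
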